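/- Let (g,B) be a finite-dimensional ε-quadratic colour Lie algebra. The Casimir element Ω(g) = Σ_i x^i x_i ∈ U_ε(g), where {x_i} is a basis of g and {x^i} its dual basis with respect to B, is independent of the choice of basis and lies in the ε-centre Z_ε(g) = {x ∈ U_ε(g) : xy = ε(x,y)yx for all y ∈ U_ε(g)} of the ε-universal enveloping algebra. -/

import Mathlib

open scoped BigOperators TensorProduct

/-- A commutation factor on an abelian group `Γ` with values in a field `k`. -/
structure CommFactor (k : Type) [Field k] (Γ : Type) [AddCommGroup Γ] : Type where
  eps : Γ → Γ → k
  eps_symm : ∀ a b, eps a b * eps b a = 1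
  eps_add_left : ∀ a b c, eps (a + b) c = eps a c * eps b c
  eps_add_right : ∀ a b c, eps a (b + c) = eps a b * eps a c

/-- A colour Lie algebra structure on a `Γ`-graded vector space. -/
structure IsColourLie {k Γ g : Type} [Field k] [AddCommGroup Γ] [DecidableEq Γ]
    [AddCommGroup g] [Module k g]
    (ε : Γ → Γ → k) (𝒢 : Γ → Submodule k g) (br : g →ₗ[k] g →ₗ[k] g) : Prop where
  internal : DirectSum.IsInternal 𝒢
  bracket_deg : ∀ a b : Γ, ∀ x ∈ 𝒢 a, ∀ y ∈ 𝒢 b, br x y ∈ 𝒢 (a + b)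
  antisymm : ∀ a b : Γ, ∀ x ∈ 𝒢 a, ∀ y ∈ 𝒢 b, br x y = -(ε a b) • br y x
  jacobi : ∀ a b c : Γ, ∀ x ∈ 𝒢 a, ∀ y ∈ 𝒢 b, ∀ z ∈ 𝒢 c,
      ε c a • br x (br y z) + ε a b • br y (br z x) + ε b c • br z (br x y) = 0

/-- An `ε`-quadratic structure: a non-degenerate `ε`-symmetric invariant bilinear
form of degree `0` on a colour Lie algebra. -/
structure IsEpsQuadratic {k Γ g : Type} [Field k] [AddCommGroup Γ]
    [AddCommGroup g] [Module k g]
    (ε : Γ → Γ → k) (𝒢 : Γ → Submodule k g) (br : g →ₗ[k] g →ₗ[k] g)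
    (B : g →ₗ[k] g →ₗ[k] k) : Prop where
  symm : ∀ a b : Γ, ∀ x ∈ 𝒢 a, ∀ y ∈ 𝒢 b, B x y = ε a b * B y x
  deg_zero : ∀ a b : Γ, a + b ≠ 0 → ∀ x ∈ 𝒢 a, ∀ y ∈ 𝒢 b, B x y = 0
  nondeg : ∀ x : g, (∀ y : g, B x y = 0) → x = 0
  invariant : ∀ a b : Γ, ∀ x ∈ 𝒢 a, ∀ y ∈ 𝒢 b, ∀ z : g,
      B (br x y) z = -(ε a b) * B y (br x z)

/-- The root space `g^α` for the action of a Cartan subalgebra `𝔥`. -/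
def rootSp {k g : Type} [Field k] [AddCommGroup g] [Module k g]
    (𝔥 : Submodule k g) (br : g →ₗ[k] g →ₗ[k] g) (α : Module.Dual k g) :
    Submodule k g where
  carrier := {x | ∀ h ∈ 𝔥, br h x = α h • x}
  add_mem' := by
    intro x y hx hy h hh
    rw [map_add, hx h hh, hy h hh, smul_add]
  zero_mem' := by intro h hh; simp
  smul_mem' := by
    intro c x hx h hh
    rw [map_smul, hx h hh, smul_comm]

/-- The `ε`-trace of an endomorphism, computed in a homogeneous basis `e`
with degrees `d`. -/
noncomputable def trEps {k Γ g ι : Type} [Field k] [AddCommGroup Γ]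
    [AddCommGroup g] [Module k g] [Fintype ι]
    (E : CommFactor k Γ) (e : Module.Basis ι k g) (d : ι → Γ) (f : g →ₗ[k] g) : k :=
  ∑ i, E.eps (d i) (d i) * e.repr (f (e i)) i

/-- The defining relations of the `ε`-universal enveloping algebra of a colour Lie
algebra with bracket `br`.  Taking `br = 0` yields the `ε`-symmetric algebra. -/
inductive EnvRel {k Γ g : Type} [Field k] [AddCommGroup Γ] [AddCommGroup g] [Module k g]
    (E : CommFactor k Γ) (𝒢 : Γ → Submodule k g) (br : g →ₗ[k] g →ₗ[k] g) :
    TensorAlgebra k g → TensorAlgebra k g → Prop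
  | mk (a b : Γ) (x y : g) (hx : x ∈ 𝒢 a) (hy : y ∈ 𝒢 b) :
      EnvRel E 𝒢 br (TensorAlgebra.ι k x * TensorAlgebra.ι k y)
        (E.eps a b • (TensorAlgebra.ι k y * TensorAlgebra.ι k x)
          + TensorAlgebra.ι k (br x y))

/-- The `ε`-universal enveloping algebra `U_ε(g)`. -/
abbrev Env {k Γ g : Type} [Field k] [AddCommGroup Γ] [AddCommGroup g] [Module k g]
    (E : CommFactor k Γ) (𝒢 : Γ → Submodule k g) (br : g →ₗ[k] g →ₗ[k] g) :=
  RingQuot (EnvRel E 𝒢 br)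

/-- The canonical image of `x : g` in `U_ε(g)`. -/
noncomputable def uMk {k Γ g : Type} [Field k] [AddCommGroup Γ] [AddCommGroup g] [Module k g]
    (E : CommFactor k Γ) (𝒢 : Γ → Submodule k g) (br : g →ₗ[k] g →ₗ[k] g) (x : g) :
    Env E 𝒢 br :=
  RingQuot.mkAlgHom k (EnvRel E 𝒢 br) (TensorAlgebra.ι k x)

namespace CasimirAux
set_option linter.unusedSectionVars false

variable {k Γ g : Type} [Field k] [AddCommGroup Γ] [DecidableEq Γ]
  [AddCommGroup g] [Module k g]

lemma eps_ne_zero (E : CommFactor k Γ) (a b : Γ) : E.eps a b ≠ 0 := by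
  intro h
  have := E.eps_symm a b
  rw [h, zero_mul] at this
  exact zero_ne_one this

lemma eps_zero_right (E : CommFactor k Γ) (a : Γ) : E.eps a 0 = 1 := by
  have h := E.eps_add_right a 0 0
  rw [add_zero] at h
  have := eps_ne_zero E a 0
  field_simp at h
  tauto

lemma eps_neg_mul (E : CommFactor k Γ) (a b : Γ) : E.eps a (-b) * E.eps a b = 1 := by
  rw [← E.eps_add_right, neg_add_cancel, eps_zero_right]

/-- the quotient map as a linear map -/
noncomputable def uL (E : CommFactor k Γ) (𝒢 : Γ → Submodule k g) (br : g →ₗ[k] g →ₗ[k] g) :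
    g →ₗ[k] Env E 𝒢 br :=
  (RingQuot.mkAlgHom k (EnvRel E 𝒢 br)).toLinearMap.comp (TensorAlgebra.ι k)

lemma uL_apply (E : CommFactor k Γ) (𝒢 : Γ → Submodule k g) (br : g →ₗ[k] g →ₗ[k] g) (x : g) :
    uL E 𝒢 br x = uMk E 𝒢 br x := rfl

lemma u_rel (E : CommFactor k Γ) (𝒢 : Γ → Submodule k g) (br : g →ₗ[k] g →ₗ[k] g)
    {a b : Γ} {x y : g} (hx : x ∈ 𝒢 a) (hy : y ∈ 𝒢 b) :
    uL E 𝒢 br x * uL E 𝒢 br y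
      = E.eps a b • (uL E 𝒢 br y * uL E 𝒢 br x) + uL E 𝒢 br (br x y) := by
  have h := RingQuot.mkAlgHom_rel k (EnvRel.mk (E := E) (br := br) a b x y hx hy)
  simpa only [map_add, map_mul, map_smul, map_smul, uL_apply, uMk] using h

end CasimirAux
namespace CasimirAux
set_option linter.unusedSectionVars false

variable {k g : Type} [Field k] [AddCommGroup g] [Module k g]

/-- right nondegeneracy from left nondegeneracy in finite dimension -/
lemma rnondeg [FiniteDimensional k g] (B : g →ₗ[k] g →ₗ[k] k)
    (hl : ∀ x, (∀ y, B x y = 0) → x = 0) :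
    ∀ y, (∀ x, B x y = 0) → y = 0 := by
  have hinj : Function.Injective B := by
    rw [← LinearMap.ker_eq_bot, LinearMap.ker_eq_bot']
    intro x hx
    exact hl x fun y => by rw [hx]; rfl
  have hsurj : Function.Surjective B := by
    rw [← LinearMap.injective_iff_surjective_of_finrank_eq_finrank
      Subspace.dual_finrank_eq.symm]
    exact hinj
  intro y hy
  rw [← Module.forall_dual_apply_eq_zero_iff k y]
  intro φ
  obtain ⟨x, rfl⟩ := hsurj φ
  exact hy x

section Expand

variable {ι : Type} [Fintype ι] [DecidableEq ι] [FiniteDimensional k g]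
  (B : g →ₗ[k] g →ₗ[k] k)
  (hl : ∀ x, (∀ y, B x y = 0) → x = 0)
  (xb : Module.Basis ι k g) (xd : ι → g)
  (hdual : ∀ i j, B (xb i) (xd j) = if i = j then (1 : k) else 0)

include hl hdual

lemma expandA (v : g) : ∑ i, B (xb i) v • xd i = v := by
  have key : ∀ j, B (xb j) (∑ i, B (xb i) v • xd i - v) = 0 := by
    intro j
    rw [map_sub, map_sum]
    simp only [map_smul, smul_eq_mul, hdual]
    rw [Finset.sum_eq_single j]
    · simp
    · intro i _ hij; simp [Ne.symm hij]
    · intro h; exact absurd (Finset.mem_univ j) h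
  have hall : ∀ x, B x (∑ i, B (xb i) v • xd i - v) = 0 := by
    intro x
    have hx := Module.Basis.sum_repr xb x
    rw [← hx, map_sum]
    simp only [LinearMap.sum_apply, map_smul, LinearMap.smul_apply, key, smul_eq_mul, mul_zero]
    simp
  exact sub_eq_zero.mp (rnondeg B hl _ hall)

lemma expandA' (v : g) : ∑ i, B v (xd i) • xb i = v := by
  have key : ∀ w, (∀ j, B w (xd j) = 0) → w = 0 := by
    intro w hw
    apply hl
    intro y
    rw [← expandA B hl xb xd hdual y, map_sum]
    simp only [map_smul, smul_eq_mul, hw, mul_zero]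
    simp
  have h : ∀ j, B (∑ i, B v (xd i) • xb i - v) (xd j) = 0 := by
    intro j
    rw [map_sub, LinearMap.sub_apply]
    rw [map_sum]
    simp only [LinearMap.sum_apply, map_smul, LinearMap.smul_apply, hdual, smul_eq_mul]
    rw [Finset.sum_eq_single j]
    · simp
    · intro i _ hij; simp [hij]
    · intro h; exact absurd (Finset.mem_univ j) h
  exact sub_eq_zero.mp (key _ h)

end Expand
end CasimirAux
namespace CasimirAux
set_option linter.unusedSectionVars false

variable {k Γ g : Type} [Field k] [AddCommGroup Γ] [AddCommGroup g] [Module k g]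

lemma casimir_indep [FiniteDimensional k g]
    (E : CommFactor k Γ) (𝒢 : Γ → Submodule k g) (br : g →ₗ[k] g →ₗ[k] g)
    (B : g →ₗ[k] g →ₗ[k] k) (hl : ∀ x, (∀ y, B x y = 0) → x = 0)
    {ι ι' : Type} [Fintype ι] [DecidableEq ι] [Fintype ι'] [DecidableEq ι']
    (xb : Module.Basis ι k g) (xd : ι → g)
    (hdual : ∀ i j, B (xb i) (xd j) = if i = j then (1 : k) else 0)
    (xb' : Module.Basis ι' k g) (xd' : ι' → g)
    (hdual' : ∀ i j, B (xb' i) (xd' j) = if i = j then (1 : k) else 0) :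
    ∑ j, uL E 𝒢 br (xd' j) * uL E 𝒢 br (xb' j)
      = ∑ i, uL E 𝒢 br (xd i) * uL E 𝒢 br (xb i) := by
  set u := uL E 𝒢 br with hu
  have h1 : ∀ j, xd' j = ∑ i, B (xb i) (xd' j) • xd i :=
    fun j => (expandA B hl xb xd hdual _).symm
  have h2 : ∀ j, xb' j = ∑ l, B (xb' j) (xd l) • xb l :=
    fun j => (expandA' B hl xb xd hdual _).symm
  have h3 : ∀ i l, (∑ j, B (xb' j) (xd l) * B (xb i) (xd' j))
      = if i = l then (1 : k) else 0 := by
    intro i l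
    have he : ∑ j, B (xb' j) (xd l) • xd' j = xd l := expandA B hl xb' xd' hdual' (xd l)
    calc ∑ j, B (xb' j) (xd l) * B (xb i) (xd' j)
        = B (xb i) (∑ j, B (xb' j) (xd l) • xd' j) := by
          rw [map_sum]
          exact Finset.sum_congr rfl fun j _ => by rw [map_smul, smul_eq_mul]
      _ = if i = l then (1 : k) else 0 := by rw [he, hdual]
  calc ∑ j, u (xd' j) * u (xb' j)
      = ∑ j, (∑ i, B (xb i) (xd' j) • u (xd i)) * (∑ l, B (xb' j) (xd l) • u (xb l)) := by
        refine Finset.sum_congr rfl fun j _ => ?_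
        have e1 : u (xd' j) = ∑ i, B (xb i) (xd' j) • u (xd i) := by
          conv_lhs => rw [h1 j]
          rw [map_sum]; simp only [map_smul]
        have e2 : u (xb' j) = ∑ l, B (xb' j) (xd l) • u (xb l) := by
          conv_lhs => rw [h2 j]
          rw [map_sum]; simp only [map_smul]
        rw [e1, e2]
    _ = ∑ j, ∑ i, ∑ l, (B (xb' j) (xd l) * B (xb i) (xd' j)) • (u (xd i) * u (xb l)) := by
        refine Finset.sum_congr rfl fun j _ => ?_
        rw [Finset.sum_mul]
        refine Finset.sum_congr rfl fun i _ => ?_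
        rw [Finset.mul_sum]
        refine Finset.sum_congr rfl fun l _ => ?_
        rw [smul_mul_assoc, mul_smul_comm, smul_smul, mul_comm]
    _ = ∑ i, ∑ l, ∑ j, (B (xb' j) (xd l) * B (xb i) (xd' j)) • (u (xd i) * u (xb l)) := by
        rw [Finset.sum_comm]
        exact Finset.sum_congr rfl fun i _ => Finset.sum_comm
    _ = ∑ i, ∑ l, (if i = l then (1 : k) else 0) • (u (xd i) * u (xb l)) := by
        refine Finset.sum_congr rfl fun i _ => Finset.sum_congr rfl fun l _ => ?_
        rw [← Finset.sum_smul, h3]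
    _ = ∑ i, u (xd i) * u (xb i) := by
        refine Finset.sum_congr rfl fun i _ => ?_
        rw [Finset.sum_eq_single i]
        · simp
        · intro l _ hli; simp [Ne.symm hli]
        · intro h; exact absurd (Finset.mem_univ i) h

end CasimirAux
namespace CasimirAux
set_option linter.unusedSectionVars false

variable {k Γ g : Type} [Field k] [AddCommGroup Γ] [DecidableEq Γ]
  [AddCommGroup g] [Module k g]

lemma homog_induction (𝒢 : Γ → Submodule k g) (hint : DirectSum.IsInternal 𝒢)
    {p : g → Prop} (h0 : p 0) (hadd : ∀ x y, p x → p y → p (x + y))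
    (hhom : ∀ a : Γ, ∀ x ∈ 𝒢 a, p x) : ∀ x, p x := by
  intro x
  have hx : x ∈ ⨆ a, 𝒢 a := by
    rw [hint.submodule_iSup_eq_top]; trivial
  exact Submodule.iSup_induction (motive := p) 𝒢 hx hhom h0 hadd

/-- The restricted pairing `𝒢 (-a) → (𝒢 a)*`. -/
noncomputable def Phi (B : g →ₗ[k] g →ₗ[k] k) (𝒢 : Γ → Submodule k g) (a : Γ) :
    𝒢 (-a) →ₗ[k] Module.Dual k (𝒢 a) :=
  ((𝒢 a).subtype.dualMap).comp ((B.flip).comp (𝒢 (-a)).subtype)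

lemma Phi_apply (B : g →ₗ[k] g →ₗ[k] k) (𝒢 : Γ → Submodule k g) (a : Γ)
    (w : 𝒢 (-a)) (x : 𝒢 a) : Phi B 𝒢 a w x = B (x : g) (w : g) := rfl

variable [FiniteDimensional k g]

lemma Phi_bij (B : g →ₗ[k] g →ₗ[k] k) (𝒢 : Γ → Submodule k g)
    (hint : DirectSum.IsInternal 𝒢)
    (hdeg : ∀ a b : Γ, a + b ≠ 0 → ∀ x ∈ 𝒢 a, ∀ y ∈ 𝒢 b, B x y = 0)
    (hl : ∀ x, (∀ y, B x y = 0) → x = 0) (a : Γ) :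
    Function.Bijective (Phi B 𝒢 a) := by
  have hinj : ∀ a : Γ, Function.Injective (Phi B 𝒢 a) := by
    intro a
    rw [← LinearMap.ker_eq_bot, LinearMap.ker_eq_bot']
    intro w hw
    have hzero : ∀ x : g, B x (w : g) = 0 := by
      refine homog_induction 𝒢 hint (by simp) (fun x y hx hy => by rw [map_add]; simp [hx, hy]) ?_
      intro b x hx
      by_cases hba : b = a
      · subst hba
        have := congrFun (congrArg DFunLike.coe hw) ⟨x, hx⟩
        simpa [Phi_apply] using this
      · exact hdeg b (-a) (fun hc => hba (by rwa [add_neg_eq_zero] at hc)) x hx w w.2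
    have : (w : g) = 0 := rnondeg B hl _ hzero
    exact Subtype.ext this
  have hle : ∀ a : Γ, Module.finrank k (𝒢 (-a)) ≤ Module.finrank k (𝒢 a) := by
    intro a
    have := LinearMap.finrank_le_finrank_of_injective (hinj a)
    rwa [Subspace.dual_finrank_eq] at this
  have heq : Module.finrank k (𝒢 (-a)) = Module.finrank k (𝒢 a) := by
    refine le_antisymm (hle a) ?_
    have := hle (-a)
    rwa [neg_neg] at this
  refine ⟨hinj a, ?_⟩
  rw [← LinearMap.injective_iff_surjective_of_finrank_eq_finrank
    (by rw [heq, Subspace.dual_finrank_eq])]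
  exact hinj a

end CasimirAux
namespace CasimirAux
set_option linter.unusedSectionVars false
set_option maxHeartbeats 800000

variable {k Γ g : Type} [Field k] [AddCommGroup Γ] [DecidableEq Γ]
  [AddCommGroup g] [Module k g]

lemma exists_homog_dual [FiniteDimensional k g]
    (𝒢 : Γ → Submodule k g) (hint : DirectSum.IsInternal 𝒢)
    (B : g →ₗ[k] g →ₗ[k] k)
    (hdeg : ∀ a b : Γ, a + b ≠ 0 → ∀ x ∈ 𝒢 a, ∀ y ∈ 𝒢 b, B x y = 0)
    (hl : ∀ x, (∀ y, B x y = 0) → x = 0) :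
    ∃ (σ : Type) (_ : Fintype σ) (_ : DecidableEq σ) (e : Module.Basis σ k g) (f : σ → g) (d : σ → Γ),
      (∀ s, e s ∈ 𝒢 (d s)) ∧ (∀ s, f s ∈ 𝒢 (-(d s))) ∧
      (∀ s t, B (e s) (f t) = if s = t then (1 : k) else 0) := by
  classical
  let bA : ∀ a : Γ, Module.Basis (Fin (Module.finrank k (𝒢 a))) k (𝒢 a) :=
    fun a => Module.finBasis k (𝒢 a)
  let e : Module.Basis (Σ a : Γ, Fin (Module.finrank k (𝒢 a))) k g := hint.collectedBasis bA
  haveI : Fintype (Σ a : Γ, Fin (Module.finrank k (𝒢 a))) :=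
    FiniteDimensional.fintypeBasisIndex e
  choose w hw using
    fun s : Σ a : Γ, Fin (Module.finrank k (𝒢 a)) =>
      (Phi_bij B 𝒢 hint hdeg hl s.1).2 ((bA s.1).coord s.2)
  refine ⟨_, inferInstance, inferInstance, e, fun s => (w s : g), Sigma.fst,
    fun s => hint.collectedBasis_mem bA s, fun s => (w s).2, ?_⟩
  intro s t
  by_cases hst : s.1 = t.1
  · obtain ⟨a, i⟩ := s
    obtain ⟨b, j⟩ := t
    dsimp only at hst
    subst hst
    have h1 : B (e ⟨a, i⟩) ((w ⟨a, j⟩ : g))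
        = Phi B 𝒢 a (w ⟨a, j⟩) ⟨e ⟨a, i⟩, hint.collectedBasis_mem bA ⟨a, i⟩⟩ := rfl
    have hw' := hw ⟨a, j⟩
    simp only at hw'
    rw [h1, hw']
    have h2 : (⟨e ⟨a, i⟩, hint.collectedBasis_mem bA ⟨a, i⟩⟩ : 𝒢 a) = bA a i := by
      apply Subtype.ext
      show e ⟨a, i⟩ = ((bA a i : 𝒢 a) : g)
      simp only [e, hint.collectedBasis_coe]
    rw [h2, Module.Basis.coord_apply, Module.Basis.repr_self, Finsupp.single_apply]
    simp
  · have hne : s.1 + -(t.1) ≠ 0 := fun hc => hst (by rwa [add_neg_eq_zero] at hc)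
    rw [hdeg _ _ hne _ (hint.collectedBasis_mem bA s) _ (w t).2]
    have hstne : s ≠ t := fun hc => hst (by rw [hc])
    simp [hstne]

end CasimirAux
namespace CasimirAux
set_option linter.unusedSectionVars false
set_option maxHeartbeats 1600000

variable {k Γ g : Type} [Field k] [AddCommGroup Γ] [DecidableEq Γ]
  [AddCommGroup g] [Module k g]

lemma casimir_central_homog [FiniteDimensional k g]
    (E : CommFactor k Γ) (𝒢 : Γ → Submodule k g) (br : g →ₗ[k] g →ₗ[k] g)
    (hLie : IsColourLie E.eps 𝒢 br)
    (B : g →ₗ[k] g →ₗ[k] k) (hquad : IsEpsQuadratic E.eps 𝒢 br B)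
    {σ : Type} [Fintype σ] [DecidableEq σ]
    (e : Module.Basis σ k g) (f : σ → g) (d : σ → Γ)
    (he : ∀ s, e s ∈ 𝒢 (d s)) (hf : ∀ s, f s ∈ 𝒢 (-(d s)))
    (hdual : ∀ s t, B (e s) (f t) = if s = t then (1 : k) else 0) :
    ∀ y : Env E 𝒢 br,
      (∑ s, uL E 𝒢 br (f s) * uL E 𝒢 br (e s)) * y
        = y * ∑ s, uL E 𝒢 br (f s) * uL E 𝒢 br (e s) := by
  classical
  set u := uL E 𝒢 br with hu
  set Ω : Env E 𝒢 br := ∑ s, u (f s) * u (e s) with hΩ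
  have hl := hquad.nondeg
  have hzcomm : ∀ c : Γ, ∀ z ∈ 𝒢 c, Ω * u z = u z * Ω := by
    intro c z hz
    have step : ∀ s, u z * (u (f s) * u (e s))
        = u (f s) * u (e s) * u z
          + (E.eps c (-(d s)) • (u (f s) * u (br z (e s))) + u (br z (f s)) * u (e s)) := by
      intro s
      have r1 := u_rel E 𝒢 br hz (hf s)
      have r2 := u_rel E 𝒢 br hz (he s)
      calc u z * (u (f s) * u (e s)) = (u z * u (f s)) * u (e s) := (mul_assoc _ _ _).symm
        _ = (E.eps c (-(d s)) • (u (f s) * u z) + u (br z (f s))) * u (e s) := by rw [r1]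
        _ = E.eps c (-(d s)) • (u (f s) * (u z * u (e s))) + u (br z (f s)) * u (e s) := by
            rw [add_mul, smul_mul_assoc, mul_assoc]
        _ = E.eps c (-(d s)) • (u (f s) * (E.eps c (d s) • (u (e s) * u z) + u (br z (e s))))
              + u (br z (f s)) * u (e s) := by rw [r2]
        _ = (E.eps c (-(d s)) * E.eps c (d s)) • (u (f s) * u (e s) * u z)
              + (E.eps c (-(d s)) • (u (f s) * u (br z (e s))) + u (br z (f s)) * u (e s)) := by
            rw [mul_add, mul_smul_comm, smul_add, smul_smul, ← mul_assoc, add_assoc]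
        _ = u (f s) * u (e s) * u z
              + (E.eps c (-(d s)) • (u (f s) * u (br z (e s))) + u (br z (f s)) * u (e s)) := by
            rw [eps_neg_mul, one_smul]
    have hzero : (∑ s, (E.eps c (-(d s)) • (u (f s) * u (br z (e s)))
        + u (br z (f s)) * u (e s))) = 0 := by
      have hex1 : ∀ s, u (br z (e s)) = ∑ t, B (br z (e s)) (f t) • u (e t) := by
        intro s
        conv_lhs => rw [← expandA' B hl e f hdual (br z (e s))]
        rw [map_sum]; simp only [map_smul]
      have hex2 : ∀ s, u (br z (f s)) = ∑ t, B (e t) (br z (f s)) • u (f t) := by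
        intro s
        conv_lhs => rw [← expandA B hl e f hdual (br z (f s))]
        rw [map_sum]; simp only [map_smul]
      have hco : ∀ s t,
          E.eps c (-(d s)) * B (br z (e s)) (f t) + B (e s) (br z (f t)) = 0 := by
        intro s t
        have hinv := hquad.invariant c (d s) z hz (e s) (he s) (f t)
        rw [hinv]
        have h := eps_neg_mul E c (d s)
        calc E.eps c (-(d s)) * (-(E.eps c (d s)) * B (e s) (br z (f t)))
              + B (e s) (br z (f t))
            = -((E.eps c (-(d s)) * E.eps c (d s)) * B (e s) (br z (f t)))
              + B (e s) (br z (f t)) := by ring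
          _ = 0 := by rw [h]; ring
      calc ∑ s, (E.eps c (-(d s)) • (u (f s) * u (br z (e s))) + u (br z (f s)) * u (e s))
          = ∑ s, ((∑ t, (E.eps c (-(d s)) * B (br z (e s)) (f t)) • (u (f s) * u (e t)))
              + ∑ t, (B (e t) (br z (f s))) • (u (f t) * u (e s))) := by
            refine Finset.sum_congr rfl fun s _ => ?_
            rw [hex1 s, hex2 s, Finset.mul_sum, Finset.smul_sum, Finset.sum_mul]
            congr 1
            · exact Finset.sum_congr rfl fun t _ => by
                rw [mul_smul_comm, smul_smul]
            · exact Finset.sum_congr rfl fun t _ => by rw [smul_mul_assoc]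
        _ = (∑ s, ∑ t, (E.eps c (-(d s)) * B (br z (e s)) (f t)) • (u (f s) * u (e t)))
              + ∑ s, ∑ t, (B (e t) (br z (f s))) • (u (f t) * u (e s)) := by
            rw [Finset.sum_add_distrib]
        _ = (∑ s, ∑ t, (E.eps c (-(d s)) * B (br z (e s)) (f t)) • (u (f s) * u (e t)))
              + ∑ s, ∑ t, (B (e s) (br z (f t))) • (u (f s) * u (e t)) := by
            congr 1
            exact Finset.sum_comm
        _ = ∑ s, ∑ t, ((E.eps c (-(d s)) * B (br z (e s)) (f t)
              + B (e s) (br z (f t))) • (u (f s) * u (e t))) := by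
            rw [← Finset.sum_add_distrib]
            refine Finset.sum_congr rfl fun s _ => ?_
            rw [← Finset.sum_add_distrib]
            exact Finset.sum_congr rfl fun t _ => (add_smul _ _ _).symm
        _ = 0 := by
            refine Finset.sum_eq_zero fun s _ => Finset.sum_eq_zero fun t _ => ?_
            rw [hco, zero_smul]
    have : u z * Ω = Ω * u z := by
      calc u z * Ω = ∑ s, u z * (u (f s) * u (e s)) := by rw [hΩ, Finset.mul_sum]
        _ = ∑ s, (u (f s) * u (e s) * u z
              + (E.eps c (-(d s)) • (u (f s) * u (br z (e s))) + u (br z (f s)) * u (e s))) := by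
            exact Finset.sum_congr rfl fun s _ => step s
        _ = (∑ s, u (f s) * u (e s) * u z)
              + ∑ s, (E.eps c (-(d s)) • (u (f s) * u (br z (e s))) + u (br z (f s)) * u (e s)) := by
            rw [Finset.sum_add_distrib]
        _ = Ω * u z := by rw [hzero, add_zero, hΩ, Finset.sum_mul]
    exact this.symm
  have hall : ∀ z : g, Ω * u z = u z * Ω := by
    refine homog_induction 𝒢 hLie.internal ?_ ?_ ?_
    · simp
    · intro x y hx hy
      rw [map_add, mul_add, add_mul, hx, hy]
    · exact fun c z hz => hzcomm c z hz
  intro y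
  obtain ⟨w, rfl⟩ := RingQuot.mkAlgHom_surjective k (EnvRel E 𝒢 br) y
  induction w using TensorAlgebra.induction with
  | algebraMap r =>
      rw [AlgHom.commutes]
      exact (Algebra.commutes r Ω).symm
  | ι x => exact hall x
  | mul a b ha hb => rw [map_mul, ← mul_assoc, ha, mul_assoc, hb, mul_assoc]
  | add a b ha hb => rw [map_add, mul_add, add_mul, ha, hb]

end CasimirAux
/-- The Casimir element `Ω(g) = Σᵢ xⁱ xᵢ ∈ U_ε(g)` is independent of the choice of
basis and lies in the `ε`-centre of `U_ε(g)` (it has degree `0`, so `ε`-centrality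
means it commutes with every element). -/
theorem casimir_basis_indep_central {k Γ g : Type} [Field k] [AddCommGroup Γ] [DecidableEq Γ]
    [AddCommGroup g] [Module k g]
    {ι ι' : Type} [Fintype ι] [DecidableEq ι] [Fintype ι'] [DecidableEq ι']
    (E : CommFactor k Γ)
    (𝒢 : Γ → Submodule k g) (br : g →ₗ[k] g →ₗ[k] g)
    (hLie : IsColourLie E.eps 𝒢 br)
    (B : g →ₗ[k] g →ₗ[k] k) (hquad : IsEpsQuadratic E.eps 𝒢 br B)
    (xb : Module.Basis ι k g) (xd : ι → g)
    (hdual : ∀ i j, B (xb i) (xd j) = if i = j then (1 : k) else 0)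
    (xb' : Module.Basis ι' k g) (xd' : ι' → g)
    (hdual' : ∀ i j, B (xb' i) (xd' j) = if i = j then (1 : k) else 0) :
    (∑ i, uMk E 𝒢 br (xd i) * uMk E 𝒢 br (xb i)
        = ∑ j, uMk E 𝒢 br (xd' j) * uMk E 𝒢 br (xb' j)) ∧
    (∀ y : Env E 𝒢 br,
        (∑ i, uMk E 𝒢 br (xd i) * uMk E 𝒢 br (xb i)) * y
          = y * ∑ i, uMk E 𝒢 br (xd i) * uMk E 𝒢 br (xb i)) := by
  classical
  haveI : FiniteDimensional k g := Module.Finite.of_basis xb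
  have hl := hquad.nondeg
  simp only [← CasimirAux.uL_apply]
  constructor
  · exact (CasimirAux.casimir_indep E 𝒢 br B hl xb xd hdual xb' xd' hdual').symm
  · obtain ⟨σ, hFin, hDec, e, f, d, he, hf, hdualef⟩ :=
      CasimirAux.exists_homog_dual 𝒢 hLie.internal B hquad.deg_zero hl
    haveI := hFin
    haveI := hDec
    have hdualef2 : ∀ s t, B (e s) (f t) = if s = t then (1 : k) else 0 := by
      intro s t
      rw [hdualef s t]
      by_cases h : s = t <;> simp [h]
    have hred : ∑ i, CasimirAux.uL E 𝒢 br (xd i) * CasimirAux.uL E 𝒢 br (xb i)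
        = ∑ s, CasimirAux.uL E 𝒢 br (f s) * CasimirAux.uL E 𝒢 br (e s) :=
      CasimirAux.casimir_indep E 𝒢 br B hl e f hdualef2 xb xd hdual
    rw [hred]
    exact CasimirAux.casimir_central_homog E 𝒢 br hLie B hquad e f d he hf hdualef2
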